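/- Consider a feedforward neural network: given input x ∈ ℝ^{d₀} and weight matrices W_l ∈ ℝ^{d_l × d_{l−1}} for l = 1, …, L, define h₀ = x, a_l = W_l h_{l−1}, and h_l = σ(a_l) componentwise for l < L, where σ : ℝ → ℝ is twice differentiable, and let the sample loss be ℒ = ℓ(a_L) for a twice-differentiable ℓ : ℝ^{d_L} → ℝ; derivatives of ℒ are taken with the input x fixed. Fix a layer l < L and suppose the off-diagonal Hessian entries of ℒ with respect to the activation inputs of layer l+1 vanish: ∂²ℒ/∂a_{l+1,k}∂a_{l+1,k'} = 0 for all k ≠ k'. Then for every i, j: (i) ∂²ℒ/∂a²_{l,i} = Σ_{k=1}^{d_{l+1}} [ (∂²ℒ/∂a²_{l+1,k}) · W²_{l+1,k,i} · σ'(a_{l,i})² + (∂ℒ/∂a_{l+1,k}) · W_{l+1,k,i} · σ''(a_{l,i}) ], and (ii) ∂²ℒ/∂W²_{l,i,j} = (∂²ℒ/∂a²_{l,i}) · h²_{l−1,j}, where (ii) holds unconditionally for every layer. -/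

import Mathlib

/-!
Feedforward network: input `x ∈ ℝ^{d 0}`, weights `W l : Fin (d (l+1)) → Fin (d l) → ℝ`
(the matrix mapping the activation outputs of layer `l` to the activation inputs of
layer `l+1`; in the paper's notation `W l = W_{l+1}`), activation `σ` applied
componentwise, and loss `ℒ = ℓ(a_L)` where `a_L` is the activation-input vector of the
last layer `L`.
-/

/-- `hval d W σ x l` is the activation-output vector `h_l` of layer `l` (with `h_0 = x`). -/
noncomputable def hval (d : ℕ → ℕ) (W : ∀ l : ℕ, Fin (d (l + 1)) → Fin (d l) → ℝ)
    (σ : ℝ → ℝ) (x : Fin (d 0) → ℝ) : (l : ℕ) → Fin (d l) → ℝ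
  | 0 => x
  | (l + 1) => fun i => σ (∑ j, W l i j * hval d W σ x l j)

/-- `aval d W σ x l` is the activation-input vector `a_{l+1}` of layer `l + 1`. -/
noncomputable def aval (d : ℕ → ℕ) (W : ∀ l : ℕ, Fin (d (l + 1)) → Fin (d l) → ℝ)
    (σ : ℝ → ℝ) (x : Fin (d 0) → ℝ) (l : ℕ) : Fin (d (l + 1)) → ℝ :=
  fun i => ∑ j, W l i j * hval d W σ x l j

/-- `Phi L d W σ ℓ l` is the loss viewed as a function of the activation-input vector of
layer `l` (the "tail" of the network from layer `l` on): `Phi L a = ℓ a` and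
`Phi l a = Phi (l+1) (W l * σ(a))` for `l < L`. -/
noncomputable def Phi (L : ℕ) (d : ℕ → ℕ) (W : ∀ l : ℕ, Fin (d (l + 1)) → Fin (d l) → ℝ)
    (σ : ℝ → ℝ) (ℓ : (Fin (d L) → ℝ) → ℝ) (l : ℕ) : (Fin (d l) → ℝ) → ℝ :=
  if h : l < L then
    fun a => Phi L d W σ ℓ (l + 1) (fun i => ∑ j, W l i j * σ (a j))
  else if he : l = L then
    fun a => ℓ (fun i => a (Fin.cast (congrArg d he.symm) i))
  else fun _ => 0
termination_by L - l
decreasing_by omega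

/-- `dA L d W σ ℓ x l i = ∂ℒ/∂a_{l+1,i}`: the partial derivative of the loss with respect
to the `i`-th activation input of layer `l + 1`, at the forward values. -/
noncomputable def dA (L : ℕ) (d : ℕ → ℕ) (W : ∀ l : ℕ, Fin (d (l + 1)) → Fin (d l) → ℝ)
    (σ : ℝ → ℝ) (ℓ : (Fin (d L) → ℝ) → ℝ) (x : Fin (d 0) → ℝ)
    (l : ℕ) (i : Fin (d (l + 1))) : ℝ :=
  deriv (fun t => Phi L d W σ ℓ (l + 1) (Function.update (aval d W σ x l) i t))
    (aval d W σ x l i)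

/-- `d2A L d W σ ℓ x l i = ∂²ℒ/∂a²_{l+1,i}`: the diagonal second partial derivative of the
loss with respect to the `i`-th activation input of layer `l + 1`. -/
noncomputable def d2A (L : ℕ) (d : ℕ → ℕ) (W : ∀ l : ℕ, Fin (d (l + 1)) → Fin (d l) → ℝ)
    (σ : ℝ → ℝ) (ℓ : (Fin (d L) → ℝ) → ℝ) (x : Fin (d 0) → ℝ)
    (l : ℕ) (i : Fin (d (l + 1))) : ℝ :=
  iteratedDeriv 2 (fun t => Phi L d W σ ℓ (l + 1) (Function.update (aval d W σ x l) i t))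
    (aval d W σ x l i)

/-- `HA L d W σ ℓ x l k k' = ∂²ℒ/∂a_{l+1,k}∂a_{l+1,k'}`: the mixed second partial
derivative of the loss with respect to the activation inputs of layer `l + 1`. -/
noncomputable def HA (L : ℕ) (d : ℕ → ℕ) (W : ∀ l : ℕ, Fin (d (l + 1)) → Fin (d l) → ℝ)
    (σ : ℝ → ℝ) (ℓ : (Fin (d L) → ℝ) → ℝ) (x : Fin (d 0) → ℝ)
    (l : ℕ) (k k' : Fin (d (l + 1))) : ℝ :=
  deriv (fun s => deriv
      (fun t => Phi L d W σ ℓ (l + 1)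
        (Function.update (Function.update (aval d W σ x l) k' s) k t))
      (Function.update (aval d W σ x l) k' s k))
    (aval d W σ x l k')

/-- `wSlice L d W σ ℓ x l i j` is the loss viewed as a function of the single weight
`W l i j`, with all other weights (and the input) fixed. -/
noncomputable def wSlice (L : ℕ) (d : ℕ → ℕ) (W : ∀ l : ℕ, Fin (d (l + 1)) → Fin (d l) → ℝ)
    (σ : ℝ → ℝ) (ℓ : (Fin (d L) → ℝ) → ℝ) (x : Fin (d 0) → ℝ)
    (l : ℕ) (i : Fin (d (l + 1))) (j : Fin (d l)) (t : ℝ) : ℝ :=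
  Phi L d W σ ℓ (l + 1)
    (fun i' => ∑ j',
      Function.update (W l) i (Function.update (W l i) j t) i' j' * hval d W σ x l j')

/-- `dW L d W σ ℓ x l i j = ∂ℒ/∂W_{l+1,i,j}`: the partial derivative of the loss with
respect to the weight `W l i j`. -/
noncomputable def dW (L : ℕ) (d : ℕ → ℕ) (W : ∀ l : ℕ, Fin (d (l + 1)) → Fin (d l) → ℝ)
    (σ : ℝ → ℝ) (ℓ : (Fin (d L) → ℝ) → ℝ) (x : Fin (d 0) → ℝ)
    (l : ℕ) (i : Fin (d (l + 1))) (j : Fin (d l)) : ℝ :=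
  deriv (wSlice L d W σ ℓ x l i j) (W l i j)

/-- `d2W L d W σ ℓ x l i j = ∂²ℒ/∂W²_{l+1,i,j}`: the diagonal second partial derivative of
the loss with respect to the weight `W l i j`. -/
noncomputable def d2W (L : ℕ) (d : ℕ → ℕ) (W : ∀ l : ℕ, Fin (d (l + 1)) → Fin (d l) → ℝ)
    (σ : ℝ → ℝ) (ℓ : (Fin (d L) → ℝ) → ℝ) (x : Fin (d 0) → ℝ)
    (l : ℕ) (i : Fin (d (l + 1))) (j : Fin (d l)) : ℝ :=
  iteratedDeriv 2 (wSlice L d W σ ℓ x l i j) (W l i j)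

lemma phi_contDiff (L : ℕ) (d : ℕ → ℕ) (W : ∀ l : ℕ, Fin (d (l + 1)) → Fin (d l) → ℝ)
    (σ : ℝ → ℝ) (ℓ : (Fin (d L) → ℝ) → ℝ)
    (hσ : ContDiff ℝ 2 σ) (hℓ : ContDiff ℝ 2 ℓ) :
    ∀ m, ContDiff ℝ 2 (Phi L d W σ ℓ m) := by
  intro m
  generalize hn : L - m = N
  induction N generalizing m with
  | zero =>
    rw [Phi, dif_neg (by omega)]
    by_cases he : m = L
    · rw [dif_pos he]
      exact hℓ.comp (contDiff_pi.mpr fun i => contDiff_apply ℝ ℝ _)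
    · rw [dif_neg he]; exact contDiff_const
  | succ k ih =>
    
    rw [Phi, dif_pos (by omega)]
    refine (ih (m+1) (by omega)).comp ?_
    refine contDiff_pi.mpr fun i => ?_
    exact ContDiff.sum fun j _ =>
      contDiff_const.mul (hσ.comp (contDiff_apply ℝ ℝ j))

lemma hasDerivAt_comp_update {n : ℕ} {f : (Fin n → ℝ) → ℝ} (a : Fin n → ℝ) (k : Fin n) (t : ℝ)
    (hf : DifferentiableAt ℝ f (Function.update a k t)) :
    HasDerivAt (fun s => f (Function.update a k s))
      (fderiv ℝ f (Function.update a k t) (Pi.single k 1)) t :=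
  hf.hasFDerivAt.comp_hasDerivAt t (hasDerivAt_update a k t)

lemma contDiff_one_fderiv_apply {n : ℕ} {f : (Fin n → ℝ) → ℝ} (hf : ContDiff ℝ 2 f) (v : Fin n → ℝ) :
    ContDiff ℝ 1 (fun y => fderiv ℝ f y v) :=
  (ContinuousLinearMap.apply ℝ ℝ v).contDiff.comp (hf.fderiv_right (by norm_num))

lemma fderiv_fderiv_apply {n : ℕ} {f : (Fin n → ℝ) → ℝ} (hf : ContDiff ℝ 2 f) (a v u : Fin n → ℝ) :
    fderiv ℝ (fun y => fderiv ℝ f y v) a u = fderiv ℝ (fderiv ℝ f) a u v := by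
  have h : (fun y => fderiv ℝ f y v) = (ContinuousLinearMap.apply ℝ ℝ v) ∘ (fderiv ℝ f) := rfl
  rw [h, fderiv_comp a (ContinuousLinearMap.apply ℝ ℝ v).differentiableAt
    ((hf.fderiv_right (le_refl _ : (1:WithTop ℕ∞)+1 ≤ 2)).differentiable (by norm_num) a)]
  simp

lemma affine_iteratedDeriv2 {g : ℝ → ℝ} (hg : ContDiff ℝ 2 g) (c b t₀ : ℝ) :
    iteratedDeriv 2 (fun t => g (c * t + b)) t₀ = deriv (deriv g) (c * t₀ + b) * c ^ 2 := by
  obtain ⟨hgd, -, hg1⟩ := contDiff_succ_iff_deriv.mp (show ContDiff ℝ (1+1) g by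
    norm_num at hg ⊢; exact hg)
  have hdgd : Differentiable ℝ (deriv g) := hg1.differentiable (by norm_num)
  have hA : ∀ t : ℝ, HasDerivAt (fun s => c * s + b) c t := fun t => by
    simpa using ((hasDerivAt_id t).const_mul c).add_const b
  have hd1 : deriv (fun t => g (c * t + b)) = fun t => deriv g (c * t + b) * c := by
    funext t
    have H : HasDerivAt (fun t => g (c * t + b)) (deriv g (c * t + b) * c) t :=
      ((hgd _).hasDerivAt).comp t (hA t)
    exact H.deriv
  rw [iteratedDeriv_succ, iteratedDeriv_one, hd1]
  have H : HasDerivAt (fun t => deriv g (c * t + b) * c)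
      (deriv (deriv g) (c * t₀ + b) * c * c) t₀ :=
    (((hdgd _).hasDerivAt).comp t₀ (hA t₀)).mul_const c
  rw [H.deriv]; ring

lemma update_line_contDiff (m : ℕ) (a : Fin m → ℝ) (i : Fin m) :
    ContDiff ℝ 2 (fun s : ℝ => Function.update a i s) := by
  have : (fun s : ℝ => Function.update a i s)
      = fun s => a + (s - a i) • (Pi.single i 1 : Fin m → ℝ) := by
    funext s j'
    by_cases hj : j' = i
    · subst hj; simp [Pi.single_apply]
    · simp [Function.update_of_ne hj, Pi.single_apply, hj]
  rw [this]
  exact contDiff_const.add ((contDiff_id.sub contDiff_const).smul contDiff_const)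

lemma part_two (L : ℕ) (d : ℕ → ℕ) (W : ∀ l : ℕ, Fin (d (l + 1)) → Fin (d l) → ℝ)
    (σ : ℝ → ℝ) (ℓ : (Fin (d L) → ℝ) → ℝ) (x : Fin (d 0) → ℝ)
    (hσ : ContDiff ℝ 2 σ) (hℓ : ContDiff ℝ 2 ℓ)
    (l' : ℕ) (i : Fin (d (l' + 1))) (j : Fin (d l')) :
    d2W L d W σ ℓ x l' i j = d2A L d W σ ℓ x l' i * (hval d W σ x l' j) ^ 2 := by
  have hgsm : ContDiff ℝ 2
      (fun s => Phi L d W σ ℓ (l'+1) (Function.update (aval d W σ x l') i s)) :=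
    (phi_contDiff L d W σ ℓ hσ hℓ (l'+1)).comp (update_line_contDiff _ _ i)
  have hws : wSlice L d W σ ℓ x l' i j = fun t =>
      (fun s => Phi L d W σ ℓ (l'+1) (Function.update (aval d W σ x l') i s))
      (hval d W σ x l' j * t
        + (aval d W σ x l' i - hval d W σ x l' j * W l' i j)) := by
    funext t
    rw [wSlice]
    congr 1
    funext i'
    by_cases hi : i' = i
    · subst hi
      rw [Function.update_self, Function.update_self]
      have h1 : ∀ j', Function.update (W l' i') j t j' * hval d W σ x l' j'
          = Function.update (fun j'' => W l' i' j'' * hval d W σ x l' j'') j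
            (t * hval d W σ x l' j) j' := by
        intro j'
        by_cases hj : j' = j
        · subst hj; simp
        · simp [Function.update_of_ne hj]
      simp_rw [h1]
      rw [Finset.sum_update_of_mem (Finset.mem_univ j)]
      have h2 : aval d W σ x l' i'
          = ∑ j' ∈ Finset.univ \ {j}, W l' i' j' * hval d W σ x l' j'
          + W l' i' j * hval d W σ x l' j := by
        rw [aval, ← Finset.sum_eq_sum_sdiff_singleton_add (Finset.mem_univ j)]
      rw [h2]; ring
    · rw [Function.update_of_ne hi, Function.update_of_ne hi]
      rfl
  have key := affine_iteratedDeriv2 hgsm (hval d W σ x l' j)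
    (aval d W σ x l' i - hval d W σ x l' j * W l' i j) (W l' i j)
  rw [d2W, hws, key, d2A, iteratedDeriv_succ, iteratedDeriv_one]
  ring_nf

section PartOne

variable {L : ℕ} {d : ℕ → ℕ} {W : ∀ l : ℕ, Fin (d (l + 1)) → Fin (d l) → ℝ}
    {σ : ℝ → ℝ} {ℓ : (Fin (d L) → ℝ) → ℝ} {x : Fin (d 0) → ℝ}

lemma part_one
    (hσ : ContDiff ℝ 2 σ) (hℓ : ContDiff ℝ 2 ℓ)
    (l : ℕ) (hl : l + 2 ≤ L)
    (hoffdiag : ∀ k k' : Fin (d (l + 2)), k ≠ k' → HA L d W σ ℓ x (l + 1) k k' = 0)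
    (i : Fin (d (l + 1))) :
    d2A L d W σ ℓ x l i =
      ∑ k : Fin (d (l + 2)),
        (d2A L d W σ ℓ x (l + 1) k * (W (l + 1) k i) ^ 2 * (deriv σ (aval d W σ x l i)) ^ 2
          + dA L d W σ ℓ x (l + 1) k * W (l + 1) k i * deriv (deriv σ) (aval d W σ x l i)) := by
  set Φ : (Fin (d (l + 2)) → ℝ) → ℝ := Phi L d W σ ℓ (l + 2) with hΦdef
  have hΦ : ContDiff ℝ 2 Φ := phi_contDiff L d W σ ℓ hσ hℓ (l + 2)
  have hΦd : Differentiable ℝ Φ := hΦ.differentiable (by norm_num)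
  set a : Fin (d (l + 1)) → ℝ := aval d W σ x l with hadef
  set a' : Fin (d (l + 2)) → ℝ := aval d W σ x (l + 1) with ha'def
  set wv : Fin (d (l + 2)) → ℝ := fun k => W (l + 1) k i with hwvdef
  -- G_v := y ↦ ∂Φ(y)(v)
  have hG : ∀ v, ContDiff ℝ 1 (fun y => fderiv ℝ Φ y v) := contDiff_one_fderiv_apply hΦ
  have hGd : ∀ v, Differentiable ℝ (fun y => fderiv ℝ Φ y v) :=
    fun v => (hG v).differentiable (by norm_num)
  -- first-order entries
  have hdA : ∀ k, dA L d W σ ℓ x (l + 1) k = fderiv ℝ Φ a' (Pi.single k 1) := by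
    intro k
    have H : HasDerivAt (fun t => Φ (Function.update a' k t))
        (fderiv ℝ Φ (Function.update a' k (a' k)) (Pi.single k 1)) (a' k) :=
      hasDerivAt_comp_update a' k (a' k) (hΦd _)
    rw [Function.update_eq_self] at H
    exact H.deriv
  -- second-order diagonal entries
  have hderivline : ∀ (k : Fin (d (l+2))) (y : Fin (d (l+2)) → ℝ),
      deriv (fun t => Φ (Function.update y k t)) = fun t =>
        fderiv ℝ Φ (Function.update y k t) (Pi.single k 1) := by
    intro k y
    funext t
    exact (hasDerivAt_comp_update y k t (hΦd _)).deriv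
  have hd2A : ∀ k, d2A L d W σ ℓ x (l + 1) k
      = fderiv ℝ (fun y => fderiv ℝ Φ y (Pi.single k 1)) a' (Pi.single k 1) := by
    intro k
    show iteratedDeriv 2 (fun t => Φ (Function.update a' k t)) (a' k) = _
    rw [iteratedDeriv_succ, iteratedDeriv_one, hderivline k a']
    have H : HasDerivAt (fun t => fderiv ℝ Φ (Function.update a' k t) (Pi.single k 1))
        (fderiv ℝ (fun y => fderiv ℝ Φ y (Pi.single k 1))
          (Function.update a' k (a' k)) (Pi.single k 1)) (a' k) :=
      hasDerivAt_comp_update a' k (a' k) (hGd _ _)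
    rw [Function.update_eq_self] at H
    exact H.deriv
  -- mixed entries vanish
  have hHA : ∀ k k' : Fin (d (l + 2)), k ≠ k' →
      fderiv ℝ (fun y => fderiv ℝ Φ y (Pi.single k 1)) a' (Pi.single k' 1) = 0 := by
    intro k k' hkk'
    have := hoffdiag k k' hkk'
    rw [HA] at this
    have hupd : ∀ s : ℝ, Function.update a' k' s k = a' k :=
      fun s => Function.update_of_ne hkk' s a'
    rw [show (fun s => deriv
        (fun t => Phi L d W σ ℓ (l + 1 + 1)
          (Function.update (Function.update (aval d W σ x (l+1)) k' s) k t))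
        (Function.update (aval d W σ x (l+1)) k' s k)) = fun s =>
          fderiv ℝ Φ (Function.update a' k' s) (Pi.single k 1) from ?_] at this
    · have H : HasDerivAt (fun s => fderiv ℝ Φ (Function.update a' k' s) (Pi.single k 1))
          (fderiv ℝ (fun y => fderiv ℝ Φ y (Pi.single k 1))
            (Function.update a' k' (a' k')) (Pi.single k' 1)) (a' k') :=
        hasDerivAt_comp_update a' k' (a' k') (hGd _ _)
      rw [Function.update_eq_self] at H
      rw [← this, H.deriv]
    · funext s
      rw [hupd s, hderivline k (Function.update a' k' s)]
      have heq : Function.update (Function.update a' k' s) k (a' k)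
          = Function.update a' k' s := by
        conv_lhs => rw [← hupd s]
        exact Function.update_eq_self _ _
      show (fderiv ℝ Φ (Function.update (Function.update a' k' s) k (a' k))) (Pi.single k 1) = _
      rw [heq]
  -- the curve c
  set c : ℝ → (Fin (d (l + 2)) → ℝ) := fun t => a' + (σ t - σ (a i)) • wv with hcdef
  have hc0 : c (a i) = a' := by simp [hcdef]
  obtain ⟨hσd, -, hσ1⟩ := contDiff_succ_iff_deriv.mp (show ContDiff ℝ (1+1) σ by
    norm_num at hσ ⊢; exact hσ)
  have hσ2 : Differentiable ℝ (deriv σ) := hσ1.differentiable (by norm_num)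
  have hcd : ∀ t : ℝ, HasDerivAt c (deriv σ t • wv) t := by
    intro t
    exact ((((hσd t).hasDerivAt).sub_const (σ (a i))).smul_const wv).const_add a'
  -- F = Φ ∘ c
  have hF : (fun t => Phi L d W σ ℓ (l + 1) (Function.update a i t)) = fun t => Φ (c t) := by
    funext t
    rw [Phi, dif_pos (show l + 1 < L by omega)]
    congr 1
    funext k
    show ∑ j, W (l+1) k j * σ (Function.update a i t j)
        = a' k + (σ t - σ (a i)) * wv k
    have h1 : ∀ j', W (l+1) k j' * σ (Function.update a i t j')
        = Function.update (fun j'' => W (l+1) k j'' * σ (a j'')) i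
          (W (l+1) k i * σ t) j' := by
      intro j'
      by_cases hj : j' = i
      · subst hj; simp
      · simp [Function.update_of_ne hj]
    simp_rw [h1]
    rw [Finset.sum_update_of_mem (Finset.mem_univ i)]
    have h2 : a' k = ∑ j' ∈ Finset.univ \ {i}, W (l+1) k j' * σ (a j')
        + W (l+1) k i * σ (a i) := by
      rw [ha'def, aval, ← Finset.sum_eq_sum_sdiff_singleton_add (Finset.mem_univ i)]
      rfl
    rw [h2, hwvdef]; ring
  -- first derivative of F
  have hd1 : deriv (fun t => Φ (c t)) = fun t => deriv σ t * fderiv ℝ Φ (c t) wv := by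
    funext t
    have H : HasDerivAt (fun t => Φ (c t)) (deriv σ t * fderiv ℝ Φ (c t) wv) t := by
      have H0 := (hΦd (c t)).hasFDerivAt.comp_hasDerivAt t (hcd t)
      simpa [Function.comp_def, smul_eq_mul] using H0
    exact H.deriv
  -- second derivative of F at a i
  have H1 : HasDerivAt (deriv σ) (deriv (deriv σ) (a i)) (a i) := (hσ2 _).hasDerivAt
  have H2 : HasDerivAt (fun t => fderiv ℝ Φ (c t) wv)
      (deriv σ (a i) * fderiv ℝ (fun y => fderiv ℝ Φ y wv) a' wv) (a i) := by
    have H0 := (hGd wv (c (a i))).hasFDerivAt.comp_hasDerivAt (a i) (hcd (a i))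
    rw [hc0] at H0
    simpa [Function.comp_def, smul_eq_mul] using H0
  have key : d2A L d W σ ℓ x l i
      = deriv (deriv σ) (a i) * fderiv ℝ Φ a' wv
        + deriv σ (a i) * (deriv σ (a i) * fderiv ℝ (fun y => fderiv ℝ Φ y wv) a' wv) := by
    rw [d2A, iteratedDeriv_succ, iteratedDeriv_one]
    rw [show (fun t => Phi L d W σ ℓ (l + 1) (Function.update (aval d W σ x l) i t))
      = fun t => Φ (c t) from hF]
    rw [hd1]
    have := (H1.mul H2).deriv
    rw [show (fun t => deriv σ t * fderiv ℝ Φ (c t) wv) = deriv σ * (fun t => fderiv ℝ Φ (c t) wv) from rfl]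
    rw [hc0] at this
    exact this
  -- linear expansions
  have hsingle : ∀ (u : Fin (d (l+2)) → ℝ) (k : Fin (d (l+2))),
      (Pi.single k (u k) : Fin (d (l+2)) → ℝ) = u k • (Pi.single k 1 : Fin (d (l+2)) → ℝ) := by
    intro u k
    funext j'
    by_cases hj : j' = k
    · subst hj; simp
    · simp [Pi.single_apply, hj]
  have hGlin : ∀ y : Fin (d (l+2)) → ℝ,
      fderiv ℝ Φ y wv = ∑ k, wv k * fderiv ℝ Φ y (Pi.single k 1) := by
    intro y
    conv_lhs => rw [← Finset.univ_sum_single wv, map_sum]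
    refine Finset.sum_congr rfl fun k _ => ?_
    rw [hsingle wv k, map_smul, smul_eq_mul]
  have E1 : fderiv ℝ Φ a' wv = ∑ k, wv k * dA L d W σ ℓ x (l+1) k := by
    rw [hGlin a']
    exact Finset.sum_congr rfl fun k _ => by rw [hdA k]
  -- second-order expansion
  have happly : ∀ k : Fin (d (l+2)),
      fderiv ℝ (fun y => fderiv ℝ Φ y (Pi.single k 1)) a' wv
        = wv k * d2A L d W σ ℓ x (l+1) k := by
    intro k
    conv_lhs => rw [← Finset.univ_sum_single wv, map_sum]
    rw [Finset.sum_eq_single k]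
    · rw [hsingle wv k, map_smul, smul_eq_mul, hd2A k]
    · intro k' _ hk'
      rw [hsingle wv k', map_smul, smul_eq_mul, hHA k k' (fun h => hk' h.symm), mul_zero]
    · intro h; exact absurd (Finset.mem_univ k) h
  have E2 : fderiv ℝ (fun y => fderiv ℝ Φ y wv) a' wv
      = ∑ k, wv k ^ 2 * d2A L d W σ ℓ x (l+1) k := by
    have hfun : (fun y => fderiv ℝ Φ y wv)
        = fun y => ∑ k, wv k * fderiv ℝ Φ y (Pi.single k 1) := funext hGlin
    rw [hfun, fderiv_fun_sum (fun k _ => ((hGd (Pi.single k 1)) a').const_mul (wv k))]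
    rw [ContinuousLinearMap.sum_apply]
    refine Finset.sum_congr rfl fun k _ => ?_
    rw [fderiv_const_mul ((hGd (Pi.single k 1)) a') (wv k)]
    rw [ContinuousLinearMap.smul_apply, smul_eq_mul, happly k]
    ring
  rw [key, E1, E2, Finset.mul_sum, Finset.mul_sum, Finset.mul_sum, ← Finset.sum_add_distrib]
  refine Finset.sum_congr rfl fun k _ => ?_
  rw [hwvdef]
  ring

end PartOne

/-- HesScale Hessian-diagonal backpropagation recursions (Eq. 13–14): if the off-diagonal
Hessian entries of the loss with respect to the activation inputs of the next layer
vanish, then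
(i) `∂²ℒ/∂a²_{l,i} = Σ_k [ ∂²ℒ/∂a²_{l+1,k} · W²_{l+1,k,i} · σ'(a_{l,i})²
      + ∂ℒ/∂a_{l+1,k} · W_{l+1,k,i} · σ''(a_{l,i}) ]`,
and (ii) `∂²ℒ/∂W²_{l,i,j} = ∂²ℒ/∂a²_{l,i} · h²_{l−1,j}` holds unconditionally for every
layer. (Here our index `l` corresponds to the paper's layer `l + 1`.) -/
theorem backprop_second_order
    (L : ℕ) (d : ℕ → ℕ) (W : ∀ l : ℕ, Fin (d (l + 1)) → Fin (d l) → ℝ)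
    (σ : ℝ → ℝ) (ℓ : (Fin (d L) → ℝ) → ℝ) (x : Fin (d 0) → ℝ)
    (hσ : ContDiff ℝ 2 σ) (hℓ : ContDiff ℝ 2 ℓ)
    (l : ℕ) (hl : l + 2 ≤ L)
    (hoffdiag : ∀ k k' : Fin (d (l + 2)), k ≠ k' → HA L d W σ ℓ x (l + 1) k k' = 0) :
    (∀ i : Fin (d (l + 1)),
      d2A L d W σ ℓ x l i =
        ∑ k : Fin (d (l + 2)),
          (d2A L d W σ ℓ x (l + 1) k * (W (l + 1) k i) ^ 2 * (deriv σ (aval d W σ x l i)) ^ 2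
            + dA L d W σ ℓ x (l + 1) k * W (l + 1) k i * deriv (deriv σ) (aval d W σ x l i))) ∧
    (∀ l' : ℕ, l' + 1 ≤ L → ∀ (i : Fin (d (l' + 1))) (j : Fin (d l')),
      d2W L d W σ ℓ x l' i j = d2A L d W σ ℓ x l' i * (hval d W σ x l' j) ^ 2) := by
  exact ⟨fun i => part_one hσ hℓ l hl hoffdiag i,
    fun l' _ i j => part_two L d W σ ℓ x hσ hℓ l' i j⟩
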